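/- arXiv:1602.06028 — 6 statements merged into one kernel-verified Lean document; each statement's English description precedes it below -/
import Mathlib

section
/- Let p ≥ 2 be an integer. For any b > 0 and ε > 0 there exists a real number e such that b^{−p} | |e|^p − |e + d|^p | > ε for some d with |d| ≤ Δ (in fact for d = Δ), where Δ > 0 is fixed. Consequently, no choice of scale b makes the bound b^{−p} | |e|^p − |e+d|^p | ≤ ε hold uniformly over all noise values e ∈ ℝ. -/
lemma stmt4_main (p : ℕ) (hp : 2 ≤ p) (Δ : ℝ) (hΔ : 0 < Δ) :
    ∀ b > (0 : ℝ), ∀ ε > (0 : ℝ), ∃ e : ℝ,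
      (b ^ p)⁻¹ * |(|e| ^ p - |e + Δ| ^ p)| > ε := by
  intro b hb ε hε
  set e : ℝ := max 1 ((ε * b ^ p + 1) / Δ) with he
  have he1 : (1 : ℝ) ≤ e := le_max_left _ _
  have he0 : 0 < e := lt_of_lt_of_le one_pos he1
  have heΔ : 0 < e + Δ := by linarith
  refine ⟨e, ?_⟩
  have hbp : (0 : ℝ) < b ^ p := pow_pos hb p
  obtain ⟨n, rfl⟩ : ∃ n, p = n + 2 := ⟨p - 2, by omega⟩
  -- key inequality: (e+Δ)^(n+2) ≥ e^(n+2) + Δ * e^(n+1)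
  have key : e ^ (n + 2) + Δ * e ^ (n + 1) ≤ (e + Δ) ^ (n + 2) := by
    have h1 : e ^ (n + 1) ≤ (e + Δ) ^ (n + 1) :=
      pow_le_pow_left₀ he0.le (by linarith) _
    have h2 : (e + Δ) * e ^ (n + 1) ≤ (e + Δ) * (e + Δ) ^ (n + 1) :=
      mul_le_mul_of_nonneg_left h1 heΔ.le
    calc e ^ (n + 2) + Δ * e ^ (n + 1) = (e + Δ) * e ^ (n + 1) := by ring
      _ ≤ (e + Δ) * (e + Δ) ^ (n + 1) := h2
      _ = (e + Δ) ^ (n + 2) := by ring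
  have hlow : ε * b ^ (n + 2) + 1 ≤ Δ * e := by
    have := le_max_right 1 ((ε * b ^ (n + 2) + 1) / Δ)
    calc ε * b ^ (n + 2) + 1 = Δ * ((ε * b ^ (n + 2) + 1) / Δ) := by
          field_simp
      _ ≤ Δ * e := mul_le_mul_of_nonneg_left this hΔ.le
  have hmono : e ≤ e ^ (n + 1) := le_self_pow₀ he1 (by omega)
  have hbig : ε * b ^ (n + 2) < (e + Δ) ^ (n + 2) - e ^ (n + 2) := by
    have : Δ * e ≤ Δ * e ^ (n + 1) := mul_le_mul_of_nonneg_left hmono hΔ.le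
    nlinarith
  rw [abs_of_pos he0, abs_of_pos heΔ, abs_sub_comm,
    abs_of_nonneg (by nlinarith : (0:ℝ) ≤ (e + Δ) ^ (n + 2) - e ^ (n + 2))]
  rw [gt_iff_lt, lt_inv_mul_iff₀ hbp]
  linarith [hbig, mul_comm ε (b ^ (n + 2))]

/-- for `p ≥ 2` the quantity `b^{-p} | |e|^p - |e+d|^p |` is unbounded in `e`
(already with `d = Δ`), so no scale `b` makes it uniformly `≤ ε` over all noise values. -/
theorem stmt4 (p : ℕ) (hp : 2 ≤ p) (Δ : ℝ) (hΔ : 0 < Δ) :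
    (∀ b > (0 : ℝ), ∀ ε > (0 : ℝ), ∃ e : ℝ,
      (b ^ p)⁻¹ * |(|e| ^ p - |e + Δ| ^ p)| > ε) ∧
    (∀ ε > (0 : ℝ), ¬ ∃ b > (0 : ℝ), ∀ e : ℝ, ∀ d : ℝ, |d| ≤ Δ →
      (b ^ p)⁻¹ * |(|e| ^ p - |e + d| ^ p)| ≤ ε) := by
  refine ⟨stmt4_main p hp Δ hΔ, ?_⟩
  rintro ε hε ⟨b, hb, hall⟩
  obtain ⟨e, hegt⟩ := stmt4_main p hp Δ hΔ b hb ε hε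
  exact absurd (hall e Δ (by rw [abs_of_pos hΔ])) (not_le.mpr hegt)
end

section
/- Let f_μ(y) ∝ exp(−(|y − μ|/b)^p) on ℝ^r (product over coordinates) with p an integer ≥ 1. For two centers s, s' ∈ ℝ^r and any output s* ∈ ∏_k [c_{k0}, c_{k1}], the log-ratio of the product densities satisfies |log(∏_k f_{s_k}(s*_k) / ∏_k f_{s'_k}(s*_k))| ≤ b^{−p} (∑_{k=1}^r ∑_{j=1}^{p−1} (p choose j) |c_{k1} − c_{k0}|^{p−j} Δ_{1,k}^j + Δ_p^p), where Δ_{1,k} ≥ |s_k − s'_k| for each k and Δ_p^p ≥ ∑_k |s_k − s'_k|^p. -/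
lemma one_sided (p : ℕ) (hp : 1 ≤ p) (a d M D : ℝ) (ha : 0 ≤ a) (hd : 0 ≤ d)
    (haM : a ≤ M) (hdD : d ≤ D) :
    (a + d) ^ p - a ^ p ≤
      (∑ j ∈ Finset.Icc 1 (p - 1), (p.choose j : ℝ) * M ^ (p - j) * D ^ j) + d ^ p := by
  have hD : 0 ≤ D := hd.trans hdD
  have hM : 0 ≤ M := ha.trans haM
  rw [add_pow]
  have h1 : Finset.range (p + 1) = insert p (Finset.range p) := by
    rw [Finset.range_add_one]
  rw [h1, Finset.sum_insert (by simp)]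
  simp only [Nat.sub_self, pow_zero, Nat.choose_self, Nat.cast_one, mul_one]
  have h2 : Finset.range p = insert 0 (Finset.Icc 1 (p - 1)) := by
    ext x
    simp [Finset.mem_range, Finset.mem_Icc]
    omega
  rw [h2, Finset.sum_insert (by simp)]
  simp only [pow_zero, Nat.sub_zero, Nat.choose_zero_right, Nat.cast_one, one_mul, mul_one]
  have hsum : ∑ j ∈ Finset.Icc 1 (p - 1), (p.choose j : ℝ) * M ^ (p - j) * D ^ j
      = ∑ k ∈ Finset.Icc 1 (p - 1), (p.choose k : ℝ) * M ^ k * D ^ (p - k) := by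
    apply Finset.sum_nbij' (fun j => p - j) (fun j => p - j)
    · intro x hx; simp only [Finset.mem_Icc] at *; omega
    · intro x hx; simp only [Finset.mem_Icc] at *; omega
    · intro x hx; simp only [Finset.mem_Icc] at *; omega
    · intro x hx; simp only [Finset.mem_Icc] at *; omega
    · intro x hx
      simp only [Finset.mem_Icc] at hx
      have h3 : p - (p - x) = x := by omega
      have h4 : p.choose (p - x) = p.choose x := by
        rw [Nat.choose_symm (by omega)]
      rw [h3, h4]
  rw [hsum]
  have hle : ∑ k ∈ Finset.Icc 1 (p - 1), a ^ k * d ^ (p - k) * (p.choose k : ℝ)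
      ≤ ∑ k ∈ Finset.Icc 1 (p - 1), (p.choose k : ℝ) * M ^ k * D ^ (p - k) := by
    apply Finset.sum_le_sum
    intro k hk
    have : a ^ k * d ^ (p - k) ≤ M ^ k * D ^ (p - k) := by
      apply mul_le_mul (pow_le_pow_left₀ ha haM k) (pow_le_pow_left₀ hd hdD _)
        (pow_nonneg hd _) (pow_nonneg hM _)
    nlinarith [Nat.cast_nonneg (α := ℝ) (p.choose k)]
  linarith

lemma key_abs (p : ℕ) (hp : 1 ≤ p) (a a' d M D : ℝ) (ha : 0 ≤ a) (ha' : 0 ≤ a')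
    (haM : a ≤ M) (ha'M : a' ≤ M) (habs : |a - a'| ≤ d) (hdD : d ≤ D) :
    |a ^ p - a' ^ p| ≤
      (∑ j ∈ Finset.Icc 1 (p - 1), (p.choose j : ℝ) * M ^ (p - j) * D ^ j) + d ^ p := by
  have hd : 0 ≤ d := (abs_nonneg _).trans habs
  rw [abs_le] at *
  constructor
  · have h1 : a' ≤ a + d := by linarith [habs.2]
    have h2 : a' ^ p ≤ (a + d) ^ p := pow_le_pow_left₀ ha' h1 p
    have := one_sided p hp a d M D ha hd haM hdD
    linarith
  · have h1 : a ≤ a' + d := by linarith [habs.1]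
    have h2 : a ^ p ≤ (a' + d) ^ p := pow_le_pow_left₀ ha h1 p
    have := one_sided p hp a' d M D ha' hd ha'M hdD
    linarith



/-- bound on the log-ratio of unnormalized generalized-Gaussian product
densities restricted to a bounded output domain. -/
theorem stmt6 {r : ℕ} (p : ℕ) (hp : 1 ≤ p) (b : ℝ) (hb : 0 < b)
    (s s' sstar c0 c1 : Fin r → ℝ) (Δ1 : Fin r → ℝ) (Δpp : ℝ)
    (hs : ∀ k, s k ∈ Set.Icc (c0 k) (c1 k))
    (hs' : ∀ k, s' k ∈ Set.Icc (c0 k) (c1 k))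
    (hstar : ∀ k, sstar k ∈ Set.Icc (c0 k) (c1 k))
    (hΔ1 : ∀ k, |s k - s' k| ≤ Δ1 k)
    (hΔp : ∑ k : Fin r, |s k - s' k| ^ p ≤ Δpp) :
    |Real.log ((∏ k : Fin r, Real.exp (-(|sstar k - s k| / b) ^ p)) /
        (∏ k : Fin r, Real.exp (-(|sstar k - s' k| / b) ^ p)))| ≤
      (b ^ p)⁻¹ *
        ((∑ k : Fin r, ∑ j ∈ Finset.Icc 1 (p - 1),
            (p.choose j : ℝ) * |c1 k - c0 k| ^ (p - j) * Δ1 k ^ j) + Δpp) := by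
  have hbp : (0:ℝ) < b ^ p := pow_pos hb p
  rw [← Real.exp_sum, ← Real.exp_sum, ← Real.exp_sub, Real.log_exp]
  have hrw : (∑ k : Fin r, -(|sstar k - s k| / b) ^ p) -
      (∑ k : Fin r, -(|sstar k - s' k| / b) ^ p) =
      ∑ k : Fin r, (b ^ p)⁻¹ * (|sstar k - s' k| ^ p - |sstar k - s k| ^ p) := by
    rw [← Finset.sum_sub_distrib]
    congr 1; ext k
    field_simp [div_pow]
    have hh : b ^ p * b⁻¹ ^ p = 1 := by rw [← mul_pow, mul_inv_cancel₀ hb.ne', one_pow]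
    linear_combination (|sstar k - s' k| ^ p - |sstar k - s k| ^ p) * hh
  rw [hrw]
  calc |∑ k : Fin r, (b ^ p)⁻¹ * (|sstar k - s' k| ^ p - |sstar k - s k| ^ p)|
      ≤ ∑ k : Fin r, |(b ^ p)⁻¹ * (|sstar k - s' k| ^ p - |sstar k - s k| ^ p)| :=
        Finset.abs_sum_le_sum_abs _ _
    _ ≤ ∑ k : Fin r, (b ^ p)⁻¹ * ((∑ j ∈ Finset.Icc 1 (p - 1),
          (p.choose j : ℝ) * |c1 k - c0 k| ^ (p - j) * Δ1 k ^ j) + |s k - s' k| ^ p) := by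
        apply Finset.sum_le_sum
        intro k _
        rw [abs_mul, abs_of_nonneg (le_of_lt (inv_pos.mpr hbp))]
        apply mul_le_mul_of_nonneg_left _ (le_of_lt (inv_pos.mpr hbp))
        obtain ⟨hs1, hs2⟩ := hs k
        obtain ⟨hs'1, hs'2⟩ := hs' k
        obtain ⟨hx1, hx2⟩ := hstar k
        have hM : |c1 k - c0 k| = c1 k - c0 k := abs_of_nonneg (by linarith)
        apply key_abs p hp _ _ (|s k - s' k|) _ _ (abs_nonneg _) (abs_nonneg _)
        · rw [hM, abs_le]; constructor <;> linarith
        · rw [hM, abs_le]; constructor <;> linarith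
        · have h0 : (sstar k - s' k) - (sstar k - s k) = s k - s' k := by ring
          have h1 := abs_abs_sub_abs_le_abs_sub (sstar k - s' k) (sstar k - s k)
          rw [h0] at h1
          exact h1
        · exact hΔ1 k
    _ ≤ _ := by
        rw [← Finset.mul_sum]
        apply mul_le_mul_of_nonneg_left _ (le_of_lt (inv_pos.mpr hbp))
        rw [Finset.sum_add_distrib]
        linarith
end

section
/- With the notation of the truncated generalized Gaussian mechanism: if b^p ≥ 2ε^{−1}(∑_{k=1}^r ∑_{j=1}^{p−1} (p choose j)|c_{k1} − c_{k0}|^{p−j} Δ_{1,k}^j + Δ_p^p), then the mechanism that samples each coordinate s*_k independently from the GG(s_k, b, p) distribution truncated to [c_{k0}, c_{k1}] satisfies ε-differential privacy: for all neighboring datasets and all measurable Q ⊆ ∏_k [c_{k0}, c_{k1}], |log(Pr(s* ∈ Q | x)/Pr(s* ∈ Q | x'))| ≤ ε. -/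
open MeasureTheory

lemma core_pow (u v A D : ℝ) (p : ℕ) (hp : 1 ≤ p)
    (hu0 : 0 ≤ u) (hv0 : 0 ≤ v) (huA : u ≤ A) (hvD : v ≤ D) :
    (u + v) ^ p ≤ u ^ p +
      ((∑ j ∈ Finset.Icc 1 (p - 1), (p.choose j : ℝ) * A ^ (p - j) * D ^ j) + v ^ p) := by
  have hA0 : 0 ≤ A := hu0.trans huA
  have hD0 : 0 ≤ D := hv0.trans hvD
  have hset : Finset.range (p + 1) = insert 0 (insert p (Finset.Icc 1 (p - 1))) := by
    ext j
    simp only [Finset.mem_range, Finset.mem_insert, Finset.mem_Icc]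
    omega
  have h0 : (0 : ℕ) ∉ insert p (Finset.Icc 1 (p - 1)) := by
    simp only [Finset.mem_insert, Finset.mem_Icc]; omega
  have hpn : p ∉ Finset.Icc 1 (p - 1) := by
    simp only [Finset.mem_Icc]; omega
  rw [add_comm u v, add_pow, hset, Finset.sum_insert h0, Finset.sum_insert hpn]
  simp only [pow_zero, Nat.choose_zero_right, Nat.choose_self, Nat.sub_zero, Nat.sub_self,
    Nat.cast_one, one_mul, mul_one]
  have hmid : ∑ j ∈ Finset.Icc 1 (p - 1), v ^ j * u ^ (p - j) * (p.choose j : ℝ) ≤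
      ∑ j ∈ Finset.Icc 1 (p - 1), (p.choose j : ℝ) * A ^ (p - j) * D ^ j := by
    apply Finset.sum_le_sum
    intro j _
    calc v ^ j * u ^ (p - j) * (p.choose j : ℝ)
        ≤ D ^ j * A ^ (p - j) * (p.choose j : ℝ) := by gcongr
      _ = (p.choose j : ℝ) * A ^ (p - j) * D ^ j := by ring
  linarith

lemma core_abs (y m m' a c Δ : ℝ) (p : ℕ) (hp : 1 ≤ p)
    (hy : y ∈ Set.Icc a c) (hm : m ∈ Set.Icc a c)
    (hd : |m - m'| ≤ Δ) :
    |y - m'| ^ p ≤ |y - m| ^ p +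
      ((∑ j ∈ Finset.Icc 1 (p - 1), (p.choose j : ℝ) * |c - a| ^ (p - j) * Δ ^ j)
        + |m - m'| ^ p) := by
  have h1 : |y - m'| ≤ |y - m| + |m - m'| := by
    calc |y - m'| = |(y - m) + (m - m')| := by ring_nf
      _ ≤ |y - m| + |m - m'| := abs_add_le _ _
  have h2 : |y - m| ≤ |c - a| := by
    rw [abs_sub_le_iff]
    constructor
    · exact (by linarith [hy.2, hm.1] : y - m ≤ c - a).trans (le_abs_self _)
    · exact (by linarith [hy.1, hm.2] : m - y ≤ c - a).trans (le_abs_self _)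
  calc |y - m'| ^ p ≤ (|y - m| + |m - m'|) ^ p :=
        pow_le_pow_left₀ (abs_nonneg _) h1 p
    _ ≤ _ := core_pow _ _ _ _ p hp (abs_nonneg _) (abs_nonneg _) h2 hd

lemma gg_cont (m b : ℝ) (p : ℕ) :
    Continuous (fun t : ℝ => Real.exp (-(|t - m| / b) ^ p)) := by fun_prop

lemma gg_intble (m b a c : ℝ) (p : ℕ) :
    IntegrableOn (fun t : ℝ => Real.exp (-(|t - m| / b) ^ p)) (Set.Icc a c) :=
  (gg_cont m b p).integrableOn_Icc

lemma Zpos (a c m b : ℝ) (p : ℕ) (hac : a < c) (hm : m ∈ Set.Icc a c) (hb : 0 < b) :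
    0 < ∫ t in Set.Icc a c, Real.exp (-(|t - m| / b) ^ p) := by
  have hlow : ∀ t ∈ Set.Icc a c,
      Real.exp (-((c - a) / b) ^ p) ≤ Real.exp (-(|t - m| / b) ^ p) := by
    intro t ht
    apply Real.exp_le_exp.mpr
    have htm : |t - m| ≤ c - a := by
      rw [abs_sub_le_iff]
      constructor <;> linarith [ht.1, ht.2, hm.1, hm.2]
    have : (|t - m| / b) ^ p ≤ ((c - a) / b) ^ p := by gcongr
    linarith
  have h1 : 0 < (c - a) * Real.exp (-((c - a) / b) ^ p) := by
    have : 0 < c - a := by linarith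
    positivity
  calc (0:ℝ) < (c - a) * Real.exp (-((c - a) / b) ^ p) := h1
    _ = ∫ _ in Set.Icc a c, Real.exp (-((c - a) / b) ^ p) := by
        rw [setIntegral_const, Real.volume_real_Icc_of_le (by linarith)]
        rw [smul_eq_mul]
    _ ≤ ∫ t in Set.Icc a c, Real.exp (-(|t - m| / b) ^ p) := by
        apply setIntegral_mono_on ((integrableOn_const_iff).mpr (Or.inr ?_))
          (gg_intble m b a c p) measurableSet_Icc hlow
        rw [Real.volume_Icc]; exact ENNReal.ofReal_lt_top

lemma key_exp (y m m' a c Δ b : ℝ) (p : ℕ) (hp : 1 ≤ p) (hb : 0 < b)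
    (hy : y ∈ Set.Icc a c) (hm' : m' ∈ Set.Icc a c) (hd : |m - m'| ≤ Δ) :
    Real.exp (-(|y - m'| / b) ^ p) ≤
      Real.exp (((∑ j ∈ Finset.Icc 1 (p - 1),
          (p.choose j : ℝ) * |c - a| ^ (p - j) * Δ ^ j) + |m - m'| ^ p) / b ^ p) *
        Real.exp (-(|y - m| / b) ^ p) := by
  rw [← Real.exp_add]
  apply Real.exp_le_exp.mpr
  have hbp : (0:ℝ) < b ^ p := pow_pos hb p
  have h := core_abs y m' m a c Δ p hp hy hm' (by rwa [abs_sub_comm])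
  rw [abs_sub_comm m' m] at h
  rw [div_pow, div_pow]
  set num := (∑ j ∈ Finset.Icc 1 (p - 1), (p.choose j : ℝ) * |c - a| ^ (p - j) * Δ ^ j)
        + |m - m'| ^ p with hnum
  have h2 : |y - m| ^ p / b ^ p ≤ (|y - m'| ^ p + num) / b ^ p :=
    (div_le_div_iff_of_pos_right hbp).mpr h
  rw [add_div] at h2
  linarith

lemma Z_le (a c b E m m' : ℝ) (p : ℕ)
    (hpt : ∀ t ∈ Set.Icc a c, Real.exp (-(|t - m'| / b) ^ p) ≤
      Real.exp E * Real.exp (-(|t - m| / b) ^ p)) :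
    (∫ t in Set.Icc a c, Real.exp (-(|t - m'| / b) ^ p)) ≤
      Real.exp E * ∫ t in Set.Icc a c, Real.exp (-(|t - m| / b) ^ p) := by
  rw [← integral_const_mul]
  exact setIntegral_mono_on (gg_intble m' b a c p) ((gg_intble m b a c p).const_mul _)
    measurableSet_Icc hpt

lemma factor_le (a c m m' Δ b : ℝ) (p : ℕ) (hp : 1 ≤ p) (hb : 0 < b) (hac : a < c)
    (hm : m ∈ Set.Icc a c) (hm' : m' ∈ Set.Icc a c) (hd : |m - m'| ≤ Δ)
    (u : ℝ) (hu : u ∈ Set.Icc a c) :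
    Real.exp (-(|u - m| / b) ^ p) /
        (∫ t in Set.Icc a c, Real.exp (-(|t - m| / b) ^ p)) ≤
      Real.exp (2 * (((∑ j ∈ Finset.Icc 1 (p - 1),
          (p.choose j : ℝ) * |c - a| ^ (p - j) * Δ ^ j) + |m - m'| ^ p) / b ^ p)) *
        (Real.exp (-(|u - m'| / b) ^ p) /
          ∫ t in Set.Icc a c, Real.exp (-(|t - m'| / b) ^ p)) := by
  set num := (∑ j ∈ Finset.Icc 1 (p - 1), (p.choose j : ℝ) * |c - a| ^ (p - j) * Δ ^ j)
        + |m - m'| ^ p with hnum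
  set E := num / b ^ p with hE
  have keyA : ∀ v ∈ Set.Icc a c, Real.exp (-(|v - m| / b) ^ p) ≤
      Real.exp E * Real.exp (-(|v - m'| / b) ^ p) := by
    intro v hv
    have h := key_exp v m' m a c Δ b p hp hb hv hm (by rwa [abs_sub_comm])
    rwa [abs_sub_comm m' m] at h
  have keyB : ∀ v ∈ Set.Icc a c, Real.exp (-(|v - m'| / b) ^ p) ≤
      Real.exp E * Real.exp (-(|v - m| / b) ^ p) := by
    intro v hv
    exact key_exp v m m' a c Δ b p hp hb hv hm' hd
  have hZ : (∫ t in Set.Icc a c, Real.exp (-(|t - m'| / b) ^ p)) ≤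
      Real.exp E * ∫ t in Set.Icc a c, Real.exp (-(|t - m| / b) ^ p) :=
    Z_le a c b E m m' p keyB
  have hZx : 0 < ∫ t in Set.Icc a c, Real.exp (-(|t - m| / b) ^ p) :=
    Zpos a c m b p hac hm hb
  have hZx' : 0 < ∫ t in Set.Icc a c, Real.exp (-(|t - m'| / b) ^ p) :=
    Zpos a c m' b p hac hm' hb
  have hA := keyA u hu
  rw [← mul_div_assoc, div_le_div_iff₀ hZx hZx']
  calc Real.exp (-(|u - m| / b) ^ p) * ∫ t in Set.Icc a c, Real.exp (-(|t - m'| / b) ^ p)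
      ≤ (Real.exp E * Real.exp (-(|u - m'| / b) ^ p)) *
        (Real.exp E * ∫ t in Set.Icc a c, Real.exp (-(|t - m| / b) ^ p)) := by
        apply mul_le_mul hA hZ hZx'.le (by positivity)
    _ = Real.exp (2 * E) * Real.exp (-(|u - m'| / b) ^ p) *
        ∫ t in Set.Icc a c, Real.exp (-(|t - m| / b) ^ p) := by
        rw [two_mul, Real.exp_add]; ring

/-- the truncated generalized Gaussian mechanism, with scale
`b^p ≥ 2ε⁻¹(∑_k ∑_{j=1}^{p-1} (p choose j)|c1_k - c0_k|^{p-j} Δ1_k^j + Δp^p)`,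
satisfies ε-differential privacy: for all neighboring datasets and all measurable
`Q` inside the bounded output box, the log-ratio of output probabilities is ≤ ε.
Each coordinate is sampled independently from the GG(s_k, b, p) density truncated
(renormalized) on `[c0 k, c1 k]`. -/
theorem stmt7 {r : ℕ} {X : Type} (N : X → X → Prop) (s : X → Fin r → ℝ)
    (c0 c1 : Fin r → ℝ) (p : ℕ) (hp : 1 ≤ p) (b ε : ℝ) (hb : 0 < b) (hε : 0 < ε)
    (Δ1 : Fin r → ℝ) (Δp : ℝ)
    (hbound : ∀ x k, s x k ∈ Set.Icc (c0 k) (c1 k))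
    (hΔ1 : ∀ x x', N x x' → ∀ k, |s x k - s x' k| ≤ Δ1 k)
    (hΔp : ∀ x x', N x x' → ∑ k : Fin r, |s x k - s x' k| ^ p ≤ Δp ^ p)
    (hscale : b ^ p ≥ 2 * ε⁻¹ *
      ((∑ k : Fin r, ∑ j ∈ Finset.Icc 1 (p - 1),
          (p.choose j : ℝ) * |c1 k - c0 k| ^ (p - j) * Δ1 k ^ j) + Δp ^ p)) :
    ∀ x x', N x x' → ∀ Q : Set (Fin r → ℝ), MeasurableSet Q →
      Q ⊆ Set.univ.pi (fun k => Set.Icc (c0 k) (c1 k)) →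
      |Real.log
        ((∫ y in Q, ∏ k : Fin r,
            (Real.exp (-(|y k - s x k| / b) ^ p) /
              ∫ t in Set.Icc (c0 k) (c1 k), Real.exp (-(|t - s x k| / b) ^ p))) /
         (∫ y in Q, ∏ k : Fin r,
            (Real.exp (-(|y k - s x' k| / b) ^ p) /
              ∫ t in Set.Icc (c0 k) (c1 k), Real.exp (-(|t - s x' k| / b) ^ p))))| ≤ ε := by
  intro x x' hN Q hQ hQsub
  by_cases hdeg : ∀ k, c0 k < c1 k
  case neg =>
    push_neg at hdeg
    obtain ⟨k0, hk0⟩ := hdeg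
    have hc : c0 k0 = c1 k0 := le_antisymm ((hbound x k0).1.trans (hbound x k0).2) hk0
    have hZ : ∀ m : ℝ,
        (∫ t in Set.Icc (c0 k0) (c1 k0), Real.exp (-(|t - m| / b) ^ p)) = 0 := by
      intro m
      rw [← hc, Set.Icc_self]
      exact setIntegral_measure_zero _ (measure_singleton _)
    have h0 : ∀ z : X,
        (∫ y in Q, ∏ k : Fin r,
          (Real.exp (-(|y k - s z k| / b) ^ p) /
            ∫ t in Set.Icc (c0 k) (c1 k), Real.exp (-(|t - s z k| / b) ^ p))) = 0 := by
      intro z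
      have : (fun y : Fin r → ℝ => ∏ k : Fin r,
          (Real.exp (-(|y k - s z k| / b) ^ p) /
            ∫ t in Set.Icc (c0 k) (c1 k), Real.exp (-(|t - s z k| / b) ^ p))) =
          fun _ => (0:ℝ) := by
        funext y
        exact Finset.prod_eq_zero (Finset.mem_univ k0) (by rw [hZ]; exact div_zero _)
      rw [this]
      simp
    rw [h0 x, h0 x', div_zero, Real.log_zero, abs_zero]
    exact hε.le
  case pos =>
    have hbp : (0:ℝ) < b ^ p := pow_pos hb p
    set E : Fin r → ℝ := fun k =>
      ((∑ j ∈ Finset.Icc 1 (p - 1),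
        (p.choose j : ℝ) * |c1 k - c0 k| ^ (p - j) * Δ1 k ^ j) + |s x k - s x' k| ^ p) / b ^ p
      with hEdef
    -- sum bound
    have hEsum : ∑ k : Fin r, 2 * E k ≤ ε := by
      have hsum1 : ∑ k : Fin r, 2 * E k =
          (2 * ((∑ k : Fin r, ∑ j ∈ Finset.Icc 1 (p - 1),
            (p.choose j : ℝ) * |c1 k - c0 k| ^ (p - j) * Δ1 k ^ j) +
            ∑ k : Fin r, |s x k - s x' k| ^ p)) / b ^ p := by
        rw [hEdef]
        simp only [← mul_div_assoc]
        rw [← Finset.sum_div, ← Finset.mul_sum, Finset.sum_add_distrib]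
      rw [hsum1, div_le_iff₀ hbp]
      have hdp := hΔp x x' hN
      have h2 : ε * b ^ p ≥ ε * (2 * ε⁻¹ *
          ((∑ k : Fin r, ∑ j ∈ Finset.Icc 1 (p - 1),
            (p.choose j : ℝ) * |c1 k - c0 k| ^ (p - j) * Δ1 k ^ j) + Δp ^ p)) :=
        mul_le_mul_of_nonneg_left hscale hε.le
      have h3 : ε * (2 * ε⁻¹ *
          ((∑ k : Fin r, ∑ j ∈ Finset.Icc 1 (p - 1),
            (p.choose j : ℝ) * |c1 k - c0 k| ^ (p - j) * Δ1 k ^ j) + Δp ^ p)) =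
          2 * ((∑ k : Fin r, ∑ j ∈ Finset.Icc 1 (p - 1),
            (p.choose j : ℝ) * |c1 k - c0 k| ^ (p - j) * Δ1 k ^ j) + Δp ^ p) := by
        field_simp
      rw [h3] at h2
      linarith
    -- pointwise factor bounds
    have hfac : ∀ k, ∀ u ∈ Set.Icc (c0 k) (c1 k),
        Real.exp (-(|u - s x k| / b) ^ p) /
            (∫ t in Set.Icc (c0 k) (c1 k), Real.exp (-(|t - s x k| / b) ^ p)) ≤
          Real.exp (2 * E k) *
            (Real.exp (-(|u - s x' k| / b) ^ p) /
              ∫ t in Set.Icc (c0 k) (c1 k), Real.exp (-(|t - s x' k| / b) ^ p)) := by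
      intro k u hu
      exact factor_le (c0 k) (c1 k) (s x k) (s x' k) (Δ1 k) b p hp hb (hdeg k)
        (hbound x k) (hbound x' k) (hΔ1 x x' hN k) u hu
    have hfac' : ∀ k, ∀ u ∈ Set.Icc (c0 k) (c1 k),
        Real.exp (-(|u - s x' k| / b) ^ p) /
            (∫ t in Set.Icc (c0 k) (c1 k), Real.exp (-(|t - s x' k| / b) ^ p)) ≤
          Real.exp (2 * E k) *
            (Real.exp (-(|u - s x k| / b) ^ p) /
              ∫ t in Set.Icc (c0 k) (c1 k), Real.exp (-(|t - s x k| / b) ^ p)) := by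
      intro k u hu
      have h := factor_le (c0 k) (c1 k) (s x' k) (s x k) (Δ1 k) b p hp hb (hdeg k)
        (hbound x' k) (hbound x k) (by rw [abs_sub_comm]; exact hΔ1 x x' hN k) u hu
      rwa [abs_sub_comm (s x' k) (s x k)] at h
    have hZpos : ∀ z : X, ∀ k, 0 < ∫ t in Set.Icc (c0 k) (c1 k),
        Real.exp (-(|t - s z k| / b) ^ p) := fun z k =>
      Zpos (c0 k) (c1 k) (s z k) b p (hdeg k) (hbound z k) hb
    -- pointwise product bounds
    have hprod : ∀ z z' : X,
        (∀ k, ∀ u ∈ Set.Icc (c0 k) (c1 k),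
          Real.exp (-(|u - s z k| / b) ^ p) /
              (∫ t in Set.Icc (c0 k) (c1 k), Real.exp (-(|t - s z k| / b) ^ p)) ≤
            Real.exp (2 * E k) *
              (Real.exp (-(|u - s z' k| / b) ^ p) /
                ∫ t in Set.Icc (c0 k) (c1 k), Real.exp (-(|t - s z' k| / b) ^ p))) →
        ∀ y ∈ Q,
          (∏ k : Fin r, (Real.exp (-(|y k - s z k| / b) ^ p) /
            ∫ t in Set.Icc (c0 k) (c1 k), Real.exp (-(|t - s z k| / b) ^ p))) ≤
          Real.exp ε * ∏ k : Fin r, (Real.exp (-(|y k - s z' k| / b) ^ p) /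
            ∫ t in Set.Icc (c0 k) (c1 k), Real.exp (-(|t - s z' k| / b) ^ p)) := by
      intro z z' hf y hy
      have hyb : ∀ k, y k ∈ Set.Icc (c0 k) (c1 k) := fun k =>
        hQsub hy k (Set.mem_univ k)
      calc (∏ k : Fin r, (Real.exp (-(|y k - s z k| / b) ^ p) /
            ∫ t in Set.Icc (c0 k) (c1 k), Real.exp (-(|t - s z k| / b) ^ p)))
          ≤ ∏ k : Fin r, (Real.exp (2 * E k) *
              (Real.exp (-(|y k - s z' k| / b) ^ p) /
                ∫ t in Set.Icc (c0 k) (c1 k), Real.exp (-(|t - s z' k| / b) ^ p))) := by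
            apply Finset.prod_le_prod
            · intro k _
              positivity
            · intro k _
              exact hf k (y k) (hyb k)
        _ = Real.exp (∑ k : Fin r, 2 * E k) *
            ∏ k : Fin r, (Real.exp (-(|y k - s z' k| / b) ^ p) /
              ∫ t in Set.Icc (c0 k) (c1 k), Real.exp (-(|t - s z' k| / b) ^ p)) := by
            rw [Finset.prod_mul_distrib, ← Real.exp_sum]
        _ ≤ Real.exp ε *
            ∏ k : Fin r, (Real.exp (-(|y k - s z' k| / b) ^ p) /
              ∫ t in Set.Icc (c0 k) (c1 k), Real.exp (-(|t - s z' k| / b) ^ p)) := by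
            apply mul_le_mul_of_nonneg_right (Real.exp_le_exp.mpr hEsum)
            apply Finset.prod_nonneg
            intro k _
            positivity
    -- integrability
    have hQfin : volume Q < ⊤ :=
      lt_of_le_of_lt (measure_mono hQsub)
        ((isCompact_univ_pi (fun k => isCompact_Icc)).measure_lt_top)
    have hint : ∀ z : X, IntegrableOn (fun y : Fin r → ℝ =>
        ∏ k : Fin r, (Real.exp (-(|y k - s z k| / b) ^ p) /
          ∫ t in Set.Icc (c0 k) (c1 k), Real.exp (-(|t - s z k| / b) ^ p))) Q := by
      intro z
      have hcont : Continuous (fun y : Fin r → ℝ =>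
          ∏ k : Fin r, (Real.exp (-(|y k - s z k| / b) ^ p) /
            ∫ t in Set.Icc (c0 k) (c1 k), Real.exp (-(|t - s z k| / b) ^ p))) := by
        apply continuous_finset_prod
        intro k _
        exact ((gg_cont (s z k) b p).comp (continuous_apply k)).div_const _
      have hconst : IntegrableOn (fun _ : Fin r → ℝ => ∏ k : Fin r,
          (1 / ∫ t in Set.Icc (c0 k) (c1 k), Real.exp (-(|t - s z k| / b) ^ p))) Q :=
        (integrableOn_const_iff).mpr (Or.inr hQfin)
      apply hconst.mono' hcont.aestronglyMeasurable
      apply Filter.Eventually.of_forall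
      intro y
      rw [Real.norm_eq_abs, abs_of_nonneg (Finset.prod_nonneg fun k _ => by positivity)]
      apply Finset.prod_le_prod
      · intro k _; positivity
      · intro k _
        have h1 : Real.exp (-(|y k - s z k| / b) ^ p) ≤ 1 := by
          have h0 : (0:ℝ) ≤ (|y k - s z k| / b) ^ p := by positivity
          calc Real.exp (-(|y k - s z k| / b) ^ p) ≤ Real.exp 0 :=
            Real.exp_le_exp.mpr (by linarith)
          _ = 1 := Real.exp_zero
        gcongr
    set I1 : ℝ := ∫ y in Q, ∏ k : Fin r, (Real.exp (-(|y k - s x k| / b) ^ p) /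
          ∫ t in Set.Icc (c0 k) (c1 k), Real.exp (-(|t - s x k| / b) ^ p)) with hI1
    set I2 : ℝ := ∫ y in Q, ∏ k : Fin r, (Real.exp (-(|y k - s x' k| / b) ^ p) /
          ∫ t in Set.Icc (c0 k) (c1 k), Real.exp (-(|t - s x' k| / b) ^ p)) with hI2
    have hIle : I1 ≤ Real.exp ε * I2 := by
      rw [hI1, hI2, ← integral_const_mul]
      exact setIntegral_mono_on (hint x) ((hint x').const_mul _) hQ (hprod x x' hfac)
    have hIle' : I2 ≤ Real.exp ε * I1 := by
      rw [hI1, hI2, ← integral_const_mul]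
      exact setIntegral_mono_on (hint x') ((hint x).const_mul _) hQ (hprod x' x hfac')
    have hInn : 0 ≤ I2 := by
      rw [hI2]
      exact setIntegral_nonneg hQ fun y _ => Finset.prod_nonneg fun k _ => by positivity
    have hInn0 : 0 ≤ I1 := by
      rw [hI1]
      exact setIntegral_nonneg hQ fun y _ => Finset.prod_nonneg fun k _ => by positivity
    clear_value I1 I2
    by_cases hI0 : I2 = 0
    · have hx0 : I1 = 0 := by
        rw [hI0] at hIle
        simp only [mul_zero] at hIle
        linarith
      rw [hI0, hx0, div_zero, Real.log_zero, abs_zero]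
      exact hε.le
    · have hI'pos : 0 < I2 := lt_of_le_of_ne hInn (Ne.symm hI0)
      have hIpos : 0 < I1 := by
        rcases lt_or_eq_of_le hInn0 with h | h
        · exact h
        · exfalso
          rw [← h] at hIle'
          simp only [mul_zero] at hIle'
          linarith
      rw [abs_le]
      constructor
      · rw [Real.le_log_iff_exp_le (by positivity)]
        rw [le_div_iff₀ hI'pos, Real.exp_neg]
        rw [inv_mul_le_iff₀ (Real.exp_pos ε)]
        linarith
      · rw [Real.log_le_iff_le_exp (by positivity)]
        rw [div_le_iff₀ hI'pos]
        linarith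
end

section
/- Exponential mechanism privacy: let u(·|x) be a utility function with sensitivity Δ_u = max over neighboring (x,x') and outputs s* of |u(s*|x) − u(s*|x')|, and let the mechanism release s* with density f(s*|x) = exp(u(s*|x)·ε/(2Δ_u))/A(x) where A(x) is the normalizing constant. Then for all neighboring (x,x') and all outputs s*, |log(f(s*|x)/f(s*|x'))| ≤ ε. -/
open MeasureTheory

/-- the exponential mechanism with utility sensitivity `Δu` and density
`f(w|x) = exp(u(w|x)·ε/(2Δu)) / A(x)` satisfies the pointwise ε-DP log-density-ratio
bound for all neighboring datasets and all outputs in `S`. -/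
theorem stmt8 {Ω X : Type} [MeasurableSpace Ω] (μ : Measure Ω) (S : Set Ω)
    (N : X → X → Prop) (u : Ω → X → ℝ) (ε Δu : ℝ) (hε : 0 < ε) (hΔu : 0 < Δu)
    (hsens : ∀ x x', N x x' → ∀ w ∈ S, |u w x - u w x'| ≤ Δu)
    (A : X → ℝ)
    (hA : ∀ x, A x = ∫ w in S, Real.exp (u w x * ε / (2 * Δu)) ∂μ)
    (hApos : ∀ x, 0 < A x) :
    ∀ x x', N x x' → ∀ w ∈ S,
      |Real.log ((Real.exp (u w x * ε / (2 * Δu)) / A x) /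
        (Real.exp (u w x' * ε / (2 * Δu)) / A x'))| ≤ ε := by
  intro x x' hN w hw
  -- integrability of each density, forced by positivity of A
  have hint : ∀ y, IntegrableOn (fun w => Real.exp (u w y * ε / (2 * Δu))) S μ := by
    intro y
    by_contra h
    have h0 := hApos y
    rw [hA y, MeasureTheory.integral_undef h] at h0
    exact lt_irrefl 0 h0
  -- comparison of normalizers
  have key : ∀ y z : X, (∀ w ∈ S, |u w y - u w z| ≤ Δu) → A z ≤ Real.exp (ε / 2) * A y := by
    intro y z hyz
    rw [hA y, hA z, ← MeasureTheory.integral_const_mul]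
    apply MeasureTheory.setIntegral_mono_ae_restrict (hint z) ((hint y).const_mul _)
    have hle : ∀ w ∈ S, Real.exp (u w z * ε / (2 * Δu)) ≤
        Real.exp (ε / 2) * Real.exp (u w y * ε / (2 * Δu)) := by
      intro w hw
      rw [← Real.exp_add]
      apply Real.exp_le_exp.mpr
      have h1 : u w z ≤ u w y + Δu := by
        have h2 := abs_le.mp (hyz w hw)
        linarith [h2.1, h2.2]
      calc u w z * ε / (2 * Δu) ≤ (u w y + Δu) * ε / (2 * Δu) := by
            apply div_le_div_of_nonneg_right _ (by positivity)
            exact mul_le_mul_of_nonneg_right h1 hε.le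
        _ = ε / 2 + u w y * ε / (2 * Δu) := by field_simp; ring
    have hnm : NullMeasurableSet
        {w | Real.exp (u w z * ε / (2 * Δu)) ≤
          Real.exp (ε / 2) * Real.exp (u w y * ε / (2 * Δu))} (μ.restrict S) :=
      nullMeasurableSet_le (hint z).aemeasurable ((hint y).const_mul _).aemeasurable
    exact (ae_restrict_iff₀ hnm).mpr (Filter.Eventually.of_forall fun w hwS => hle w hwS)
  have h1 : A x' ≤ Real.exp (ε / 2) * A x := key x x' (hsens x x' hN)
  have h2 : A x ≤ Real.exp (ε / 2) * A x' := by
    apply key x' x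
    intro w hwS
    rw [abs_sub_comm]
    exact hsens x x' hN w hwS
  have hAx := hApos x
  have hAx' := hApos x'
  -- log of ratio of normalizers
  have hlogA : |Real.log (A x') - Real.log (A x)| ≤ ε / 2 := by
    rw [abs_le]
    constructor
    · have := Real.log_le_log (by positivity) h2
      rw [Real.log_mul (Real.exp_pos _).ne' hAx'.ne', Real.log_exp] at this
      linarith
    · have := Real.log_le_log (by positivity) h1
      rw [Real.log_mul (Real.exp_pos _).ne' hAx.ne', Real.log_exp] at this
      linarith
  have hsen := hsens x x' hN w hw
  have hdiff : |u w x * ε / (2 * Δu) - u w x' * ε / (2 * Δu)| ≤ ε / 2 := by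
    have heq : u w x * ε / (2 * Δu) - u w x' * ε / (2 * Δu) =
        (u w x - u w x') * (ε / (2 * Δu)) := by ring
    rw [heq, abs_mul, abs_of_pos (by positivity : (0:ℝ) < ε / (2 * Δu))]
    calc |u w x - u w x'| * (ε / (2 * Δu)) ≤ Δu * (ε / (2 * Δu)) := by
          apply mul_le_mul_of_nonneg_right hsen (by positivity)
      _ = ε / 2 := by field_simp
  have hlog : Real.log ((Real.exp (u w x * ε / (2 * Δu)) / A x) /
      (Real.exp (u w x' * ε / (2 * Δu)) / A x')) =
      (u w x * ε / (2 * Δu) - u w x' * ε / (2 * Δu)) +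
      (Real.log (A x') - Real.log (A x)) := by
    rw [Real.log_div (by positivity) (by positivity),
        Real.log_div (Real.exp_pos _).ne' hAx.ne',
        Real.log_div (Real.exp_pos _).ne' hAx'.ne',
        Real.log_exp, Real.log_exp]
    ring
  rw [hlog]
  calc |(u w x * ε / (2 * Δu) - u w x' * ε / (2 * Δu)) +
      (Real.log (A x') - Real.log (A x))|
      ≤ |u w x * ε / (2 * Δu) - u w x' * ε / (2 * Δu)| +
        |Real.log (A x') - Real.log (A x)| := abs_add_le _ _
    _ ≤ ε / 2 + ε / 2 := add_le_add hdiff hlogA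
    _ = ε := by ring
end

section
/- When the utility function is u(s*|s) = −‖s* − s‖_p^p for integer p ≥ 1 and each s_k, s*_k ∈ [c_{k0}, c_{k1}], the sensitivity satisfies Δ_u ≤ ∑_{k=1}^r ∑_{j=1}^p (p choose j) (max{|c_{k0}|, |c_{k1}|})^{p−j} Δ_{1,k}^{(j)}, where Δ_{1,k}^{(j)} = max over neighboring pairs of |s_k(x)^j − s_k(x')^j|. -/
lemma key_stmt12 (p : ℕ) (a b t M : ℝ) (hM : |t| ≤ M) (Δ : ℕ → ℝ)
    (hΔ : ∀ j, |a ^ j - b ^ j| ≤ Δ j) :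
    abs (|a - t| ^ p - |b - t| ^ p) ≤
      ∑ j ∈ Finset.Icc 1 p, (p.choose j : ℝ) * M ^ (p - j) * Δ j := by
  have hM0 : 0 ≤ M := le_trans (abs_nonneg t) hM
  have hbin : (a - t) ^ p - (b - t) ^ p
      = ∑ j ∈ Finset.range (p + 1), (a ^ j - b ^ j) * (-t) ^ (p - j) * (p.choose j : ℝ) := by
    have ha : (a - t) ^ p = ∑ j ∈ Finset.range (p + 1),
        a ^ j * (-t) ^ (p - j) * (p.choose j : ℝ) := by
      rw [show a - t = a + (-t) by ring, add_pow]
    have hb : (b - t) ^ p = ∑ j ∈ Finset.range (p + 1),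
        b ^ j * (-t) ^ (p - j) * (p.choose j : ℝ) := by
      rw [show b - t = b + (-t) by ring, add_pow]
    rw [ha, hb, ← Finset.sum_sub_distrib]
    congr 1; funext j; ring
  calc abs (|a - t| ^ p - |b - t| ^ p)
      = abs (|(a - t) ^ p| - |(b - t) ^ p|) := by rw [abs_pow, abs_pow]
    _ ≤ |(a - t) ^ p - (b - t) ^ p| := abs_abs_sub_abs_le_abs_sub _ _
    _ = |∑ j ∈ Finset.range (p + 1), (a ^ j - b ^ j) * (-t) ^ (p - j) * (p.choose j : ℝ)| := by
        rw [hbin]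
    _ ≤ ∑ j ∈ Finset.range (p + 1), |(a ^ j - b ^ j) * (-t) ^ (p - j) * (p.choose j : ℝ)| :=
        Finset.abs_sum_le_sum_abs _ _
    _ = ∑ j ∈ Finset.Icc 1 p, |(a ^ j - b ^ j) * (-t) ^ (p - j) * (p.choose j : ℝ)| := by
        refine (Finset.sum_subset ?_ ?_).symm
        · intro j hj
          simp only [Finset.mem_Icc] at hj
          simp [Finset.mem_range]; omega
        · intro j hj hj'
          simp only [Finset.mem_range, Finset.mem_Icc, not_and, not_le] at hj hj'
          have : j = 0 := by omega
          simp [this]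
    _ ≤ ∑ j ∈ Finset.Icc 1 p, (p.choose j : ℝ) * M ^ (p - j) * Δ j := by
        refine Finset.sum_le_sum fun j _ => ?_
        rw [abs_mul, abs_mul, abs_pow, abs_neg]
        have h1 : |a ^ j - b ^ j| ≤ Δ j := hΔ j
        have h2 : |t| ^ (p - j) ≤ M ^ (p - j) :=
          pow_le_pow_left₀ (abs_nonneg t) hM _
        have h0 : (0:ℝ) ≤ Δ j := le_trans (abs_nonneg _) h1
        calc |a ^ j - b ^ j| * |t| ^ (p - j) * |(p.choose j : ℝ)|
            ≤ Δ j * M ^ (p - j) * (p.choose j : ℝ) := by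
              rw [Nat.abs_cast]
              exact mul_le_mul (mul_le_mul h1 h2 (pow_nonneg (abs_nonneg t) _) h0)
                le_rfl (Nat.cast_nonneg _) (by positivity)
          _ = (p.choose j : ℝ) * M ^ (p - j) * Δ j := by ring

/-- Lemma 2c: for `u(s*|s) = -‖s* - s‖_p^p` with bounded components,
`Δ_u ≤ ∑_k ∑_{j=1}^p (p choose j) (max{|c0_k|,|c1_k|})^{p-j} Δ_{1,k}^{(j)}`,
where `Δ_{1,k}^{(j)}` bounds `|s_k^j - (s'_k)^j|`. -/
theorem stmt12 {r : ℕ} (p : ℕ) (hp : 1 ≤ p) (sstar s s' c0 c1 : Fin r → ℝ)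
    (Δ1j : Fin r → ℕ → ℝ)
    (hs : ∀ k, s k ∈ Set.Icc (c0 k) (c1 k))
    (hs' : ∀ k, s' k ∈ Set.Icc (c0 k) (c1 k))
    (hstar : ∀ k, sstar k ∈ Set.Icc (c0 k) (c1 k))
    (hΔ1j : ∀ k j, |s k ^ j - s' k ^ j| ≤ Δ1j k j) :
    |(∑ k : Fin r, |s k - sstar k| ^ p) - ∑ k : Fin r, |s' k - sstar k| ^ p| ≤
      ∑ k : Fin r, ∑ j ∈ Finset.Icc 1 p,
        (p.choose j : ℝ) * (max |c0 k| |c1 k|) ^ (p - j) * Δ1j k j := by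
  calc |(∑ k : Fin r, |s k - sstar k| ^ p) - ∑ k : Fin r, |s' k - sstar k| ^ p|
      = |∑ k : Fin r, (|s k - sstar k| ^ p - |s' k - sstar k| ^ p)| := by
        rw [Finset.sum_sub_distrib]
    _ ≤ ∑ k : Fin r, abs (|s k - sstar k| ^ p - |s' k - sstar k| ^ p) :=
        Finset.abs_sum_le_sum_abs _ _
    _ ≤ ∑ k : Fin r, ∑ j ∈ Finset.Icc 1 p,
        (p.choose j : ℝ) * (max |c0 k| |c1 k|) ^ (p - j) * Δ1j k j := by
        refine Finset.sum_le_sum fun k _ => ?_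
        exact key_stmt12 p (s k) (s' k) (sstar k) _
          (abs_le_max_abs_abs (hstar k).1 (hstar k).2) (Δ1j k) (hΔ1j k)
end

section
/- Comparing the Gaussian mechanism of (ε,δ)-pDP with the Laplace mechanism of ε-DP for a scalar query: if δ < 2Φ(−√2) ≈ 0.157, then the Gaussian variance σ² = [(2ε)^{−1}Δ(√((Φ^{−1}(δ/2))² + 2ε) − Φ^{−1}(δ/2))]² exceeds the Laplace variance 2(Δ/ε)². Equivalently, (√((Φ^{−1}(δ/2))² + 2ε) − Φ^{−1}(δ/2))²/8 > 1 whenever (Φ^{−1}(δ/2))² > 2. -/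
open ProbabilityTheory

/-- if `δ < 2Φ(−√2)`, the Gaussian-mechanism variance
`σ² = [(2ε)⁻¹Δ(√(q² + 2ε) − q)]²` (with `q = Φ⁻¹(δ/2)`) exceeds the Laplace
variance `2(Δ/ε)²`; equivalently `(√(q² + 2ε) − q)²/8 > 1` whenever `q² > 2`. -/
theorem stmt16 (ε δ Δ q : ℝ) (hε : 0 < ε) (hδ0 : 0 < δ) (hδ1 : δ < 1) (hΔ : 0 < Δ)
    (hq : cdf (gaussianReal 0 1) q = δ / 2)
    (hδsmall : δ < 2 * cdf (gaussianReal 0 1) (-Real.sqrt 2)) :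
    ((2 * ε)⁻¹ * Δ * (Real.sqrt (q ^ 2 + 2 * ε) - q)) ^ 2 > 2 * (Δ / ε) ^ 2 ∧
    (q ^ 2 > 2 → (Real.sqrt (q ^ 2 + 2 * ε) - q) ^ 2 / 8 > 1) := by
  have hqlt : q < -Real.sqrt 2 := by
    by_contra h
    push_neg at h
    have hm := (cdf (gaussianReal 0 1)).mono h
    rw [hq] at hm
    linarith
  have h2 : (0:ℝ) < Real.sqrt 2 := Real.sqrt_pos.mpr (by norm_num)
  have hq0 : q < 0 := by linarith
  have hs : -q < Real.sqrt (q ^ 2 + 2 * ε) := by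
    rw [show q ^ 2 + 2 * ε = (-q) ^ 2 + 2 * ε by ring]
    have := Real.lt_sqrt (x := -q) (y := (-q) ^ 2 + 2 * ε) (by linarith)
    exact this.mpr (by nlinarith)
  have hsq2 : Real.sqrt 2 ^ 2 = 2 := Real.sq_sqrt (by norm_num)
  have hbig : Real.sqrt (q ^ 2 + 2 * ε) - q > 2 * Real.sqrt 2 := by nlinarith
  have hs8 : (Real.sqrt (q ^ 2 + 2 * ε) - q) ^ 2 > 8 := by nlinarith
  constructor
  · have hε' : ε ≠ 0 := ne_of_gt hε
    have hrw : ((2 * ε)⁻¹ * Δ * (Real.sqrt (q ^ 2 + 2 * ε) - q)) ^ 2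
        = Δ ^ 2 * (Real.sqrt (q ^ 2 + 2 * ε) - q) ^ 2 / (4 * ε ^ 2) := by
      field_simp; ring
    rw [gt_iff_lt, hrw, lt_div_iff₀ (by positivity), div_pow]
    have hc : Δ ^ 2 / ε ^ 2 * ε ^ 2 = Δ ^ 2 :=
      div_mul_cancel₀ _ (by positivity)
    nlinarith [pow_pos hΔ 2, hc]
  · intro _
    linarith
end
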